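/- Let φ be a real-valued characteristic function of a symmetric probability distribution F with M := sup_{x>0} x^α(1 − F(x)) < ∞ for some α ∈ (0,2). Then there is a constant A = A(α) < ∞ such that for all Δ > 0, ∫₀^Δ (1 − φ(uβ)) du ≤ 2·A·M·Δ^{α+1}·β^α for every β ∈ [0,1]. -/

import Mathlib

open MeasureTheory Set intervalIntegral

lemma aux_one_sub_cos_le (s : ℝ) : 1 - Real.cos s ≤ min 2 (s ^ 2) := by
  refine le_min (by nlinarith [Real.neg_one_le_cos s]) ?_
  have h1 := Real.sin_sq_le_sq (x := s / 2)
  have h2 := Real.sin_sq_add_cos_sq (s / 2)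
  have h3 := Real.cos_two_mul (s / 2)
  have h4 : 2 * (s / 2) = s := by ring
  rw [h4] at h3
  nlinarith

theorem char_fn_integrated_deficiency (α : ℝ) (hα0 : 0 < α) (hα2 : α < 2) :
    ∃ A : ℝ, ∀ (ν : Measure ℝ), IsProbabilityMeasure ν →
      ν.map (fun x => -x) = ν →
      ∀ M : ℝ, (∀ x : ℝ, 0 < x → x ^ α * (ν (Ioi x)).toReal ≤ M) →
      ∀ (φ : ℝ → ℝ), (∀ u : ℝ, φ u = ∫ x, Real.cos (u * x) ∂ν) →
      ∀ Δ : ℝ, 0 < Δ → ∀ β : ℝ, 0 ≤ β → β ≤ 1 →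
        (∫ u in (0:ℝ)..Δ, (1 - φ (u * β))) ≤ 2 * A * M * Δ ^ (α + 1) * β ^ α := by
  have hhalf : 0 < 1 - α / 2 := by linarith
  refine ⟨(2:ℝ) ^ (1 - α / 2) / (1 - α / 2), ?_⟩
  set A : ℝ := (2:ℝ) ^ (1 - α / 2) / (1 - α / 2) with hAdef
  intro ν hprob hsym M hM φ hφ Δ hΔ β hβ0 hβ1
  have hA : 0 < A := div_pos (Real.rpow_pos_of_pos two_pos _) hhalf
  have hM0 : 0 ≤ M := le_trans (by positivity) (hM 1 one_pos)
  rcases eq_or_lt_of_le hβ0 with hβ | hβ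
  · -- β = 0
    have hφ0 : ∀ u : ℝ, φ (u * β) = 1 := by
      intro u
      rw [← hβ, mul_zero, hφ]
      simp [hprob.measure_univ]
    have hlhs : (∫ u in (0:ℝ)..Δ, (1 - φ (u * β))) = 0 := by simp [hφ0]
    rw [hlhs, ← hβ, Real.zero_rpow hα0.ne', mul_zero]
  · -- β > 0
    set c : ℝ := Δ * β with hcdef
    have hc : 0 < c := mul_pos hΔ hβ
    set B : ℝ := 2 * A * M * c ^ α with hBdef
    have hB : 0 ≤ B := by
      have h1 := Real.rpow_nonneg hc.le α
      have h2A : (0:ℝ) < 2 * A := by linarith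
      positivity
    -- main lintegral bound
    have hLmain : (∫⁻ x, ENNReal.ofReal (min 2 ((c * x) ^ 2)) ∂ν) ≤ ENNReal.ofReal B := by
      have f_nn : 0 ≤ᵐ[ν] fun x => min 2 ((c * x) ^ 2) :=
        ae_of_all _ fun x => le_min (by norm_num) (sq_nonneg _)
      have f_mble : AEMeasurable (fun x => min 2 ((c * x) ^ 2)) ν :=
        (continuous_const.min ((continuous_const.mul continuous_id).pow 2)).aemeasurable
      rw [lintegral_eq_lintegral_meas_lt ν f_nn f_mble]
      have hsplit : (Ioi (0:ℝ)) = Ioc (0:ℝ) 2 ∪ Ioi 2 :=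
        (Ioc_union_Ioi_eq_Ioi (by norm_num)).symm
      rw [hsplit, lintegral_union measurableSet_Ioi (Ioc_disjoint_Ioi le_rfl)]
      have h2 : (∫⁻ t in Ioi (2:ℝ), ν {a | t < min 2 ((c * a) ^ 2)}) = 0 := by
        rw [setLIntegral_congr_fun measurableSet_Ioi
          (fun t (ht : t ∈ Ioi (2:ℝ)) => ?_), lintegral_zero]
        have hempty : {a : ℝ | t < min 2 ((c * a) ^ 2)} = ∅ := by
          ext a
          simp only [mem_setOf_eq, mem_empty_iff_false, iff_false, not_lt]
          exact le_trans (min_le_left _ _) (le_of_lt ht)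
        rw [hempty, measure_empty]
      rw [h2, add_zero]
      have bound1 : ∀ t ∈ Ioc (0:ℝ) 2,
          ν {a | t < min 2 ((c * a) ^ 2)} ≤ ENNReal.ofReal ((2 * M * c ^ α) * t ^ (-(α/2))) := by
        intro t ht
        set a0 : ℝ := Real.sqrt t / c with ha0def
        have hst : 0 < Real.sqrt t := Real.sqrt_pos.2 ht.1
        have ha0 : 0 < a0 := div_pos hst hc
        have hsub : {a : ℝ | t < min 2 ((c * a) ^ 2)} ⊆ Iio (-a0) ∪ Ioi a0 := by
          intro x hx
          have hx2 : t < (c * x) ^ 2 := lt_of_lt_of_le hx (min_le_right _ _)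
          have hpos : 0 < |c * x| := by
            rcases eq_or_ne (c * x) 0 with h | h
            · rw [h] at hx2; norm_num at hx2; linarith [ht.1]
            · exact abs_pos.2 h
          have h3 : Real.sqrt t < |c * x| := by
            rw [Real.sqrt_lt' hpos, sq_abs]; exact hx2
          have h4 : a0 < |x| := by
            rw [ha0def, div_lt_iff₀ hc]
            calc Real.sqrt t < |c * x| := h3
              _ = |x| * c := by rw [abs_mul, abs_of_pos hc]; ring
          rcases lt_abs.1 h4 with h5 | h5
          · exact Or.inr h5
          · left; simp only [mem_Iio]; linarith
        have hIio : ν (Iio (-a0)) = ν (Ioi a0) := by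
          conv_lhs => rw [← hsym]
          rw [Measure.map_apply measurable_neg measurableSet_Iio]
          congr 1
          ext x
          simp only [mem_preimage, mem_Iio, mem_Ioi, neg_lt_neg_iff]
        have htail : ν (Ioi a0) ≤ ENNReal.ofReal (M * a0 ^ (-α)) := by
          rw [ENNReal.le_ofReal_iff_toReal_le (measure_ne_top ν _)
            (mul_nonneg hM0 (Real.rpow_nonneg ha0.le _))]
          have hpow : 0 < a0 ^ α := Real.rpow_pos_of_pos ha0 α
          rw [Real.rpow_neg ha0.le, ← div_eq_mul_inv, le_div_iff₀ hpow]
          have := hM a0 ha0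
          linarith
        have ha0pow : a0 ^ (-α) = c ^ α * t ^ (-(α/2)) := by
          rw [ha0def, Real.div_rpow (Real.sqrt_nonneg t) hc.le,
            Real.rpow_neg hc.le, Real.sqrt_eq_rpow,
            ← Real.rpow_mul ht.1.le, show (1/2 : ℝ) * (-α) = -(α/2) by ring,
            div_eq_mul_inv, inv_inv]
          ring
        calc ν {a | t < min 2 ((c * a) ^ 2)} ≤ ν (Iio (-a0) ∪ Ioi a0) := measure_mono hsub
          _ ≤ ν (Iio (-a0)) + ν (Ioi a0) := measure_union_le _ _
          _ = ν (Ioi a0) + ν (Ioi a0) := by rw [hIio]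
          _ ≤ ENNReal.ofReal (M * a0 ^ (-α)) + ENNReal.ofReal (M * a0 ^ (-α)) :=
              add_le_add htail htail
          _ = ENNReal.ofReal (M * a0 ^ (-α) + M * a0 ^ (-α)) :=
              (ENNReal.ofReal_add (mul_nonneg hM0 (Real.rpow_nonneg ha0.le _))
                (mul_nonneg hM0 (Real.rpow_nonneg ha0.le _))).symm
          _ = ENNReal.ofReal ((2 * M * c ^ α) * t ^ (-(α/2))) := by
              rw [ha0pow]; congr 1; ring
      calc (∫⁻ t in Ioc (0:ℝ) 2, ν {a | t < min 2 ((c * a) ^ 2)})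
          ≤ ∫⁻ t in Ioc (0:ℝ) 2, ENNReal.ofReal ((2 * M * c ^ α) * t ^ (-(α/2))) :=
            setLIntegral_mono' measurableSet_Ioc bound1
        _ ≤ ENNReal.ofReal B := by
            have hint2 : IntegrableOn (fun t : ℝ => (2 * M * c ^ α) * t ^ (-(α/2)))
                (Ioc (0:ℝ) 2) volume := by
              have h := (intervalIntegrable_rpow' (a := 0) (b := 2)
                (r := -(α/2)) (by linarith)).const_mul (2 * M * c ^ α)
              rwa [intervalIntegrable_iff, uIoc_of_le (by norm_num : (0:ℝ) ≤ 2)] at h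
            have hnn : 0 ≤ᵐ[volume.restrict (Ioc (0:ℝ) 2)]
                fun t : ℝ => (2 * M * c ^ α) * t ^ (-(α/2)) := by
              filter_upwards [ae_restrict_mem measurableSet_Ioc] with t ht
              have : (0:ℝ) ≤ 2 * M * c ^ α := by positivity
              exact mul_nonneg this (Real.rpow_nonneg ht.1.le _)
            rw [← ofReal_integral_eq_lintegral_ofReal hint2 hnn]
            apply ENNReal.ofReal_le_ofReal
            have hval : (∫ t in Ioc (0:ℝ) 2, (2 * M * c ^ α) * t ^ (-(α/2))) =
                (2 * M * c ^ α) * ((2:ℝ) ^ (1 - α/2) / (1 - α/2)) := by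
              rw [← intervalIntegral.integral_of_le (by norm_num : (0:ℝ) ≤ 2),
                intervalIntegral.integral_const_mul,
                integral_rpow (Or.inl (by linarith : (-1:ℝ) < -(α/2))),
                Real.zero_rpow (by intro h; rw [show -(α/2) + 1 = 1 - α/2 by ring] at h; linarith),
                show -(α/2) + 1 = 1 - α/2 by ring, sub_zero]
            rw [hval, hBdef, hAdef]
            exact le_of_eq (by ring)
    -- pointwise-in-u bound
    have key : ∀ u ∈ Icc (0:ℝ) Δ, 1 - φ (u * β) ≤ B := by
      intro u hu
      rw [hφ]
      have hint : Integrable (fun x => Real.cos (u * β * x)) ν := by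
        refine Integrable.mono' (integrable_const (1:ℝ))
          ((Real.continuous_cos.comp (continuous_const.mul continuous_id)).aestronglyMeasurable)
          (ae_of_all _ fun x => ?_)
        rw [Real.norm_eq_abs]; exact Real.abs_cos_le_one _
      have h1 : (1:ℝ) - ∫ x, Real.cos (u * β * x) ∂ν
          = ∫ x, (1 - Real.cos (u * β * x)) ∂ν := by
        rw [integral_sub (integrable_const 1) hint, MeasureTheory.integral_const]
        simp [hprob.measure_univ]
      rw [h1]
      have nn : 0 ≤ᵐ[ν] fun x => 1 - Real.cos (u * β * x) :=
        ae_of_all _ fun x => by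
          show (0:ℝ) ≤ 1 - Real.cos (u * β * x)
          linarith [Real.cos_le_one (u * β * x)]
      have meas : AEStronglyMeasurable (fun x => 1 - Real.cos (u * β * x)) ν :=
        (continuous_const.sub
          (Real.continuous_cos.comp (continuous_const.mul continuous_id))).aestronglyMeasurable
      rw [integral_eq_lintegral_of_nonneg_ae nn meas]
      refine ENNReal.toReal_le_of_le_ofReal hB (le_trans (lintegral_mono fun x => ?_) hLmain)
      apply ENNReal.ofReal_le_ofReal
      refine (aux_one_sub_cos_le _).trans (min_le_min le_rfl ?_)
      rw [hcdef]
      have hu2 : u ^ 2 ≤ Δ ^ 2 := pow_le_pow_left₀ hu.1 hu.2 2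
      nlinarith [sq_nonneg (β * x)]
    -- assemble
    have hRHS : Δ * B = 2 * A * M * Δ ^ (α + 1) * β ^ α := by
      rw [hBdef, hcdef, Real.mul_rpow hΔ.le hβ0, Real.rpow_add hΔ, Real.rpow_one]
      ring
    by_cases hii : IntervalIntegrable (fun u => 1 - φ (u * β)) volume 0 Δ
    · calc (∫ u in (0:ℝ)..Δ, (1 - φ (u * β))) ≤ ∫ _u in (0:ℝ)..Δ, B :=
            intervalIntegral.integral_mono_on hΔ.le hii intervalIntegrable_const key
        _ = Δ * B := by rw [intervalIntegral.integral_const, smul_eq_mul, sub_zero]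
        _ = _ := hRHS
    · rw [intervalIntegral.integral_undef hii, ← hRHS]
      exact mul_nonneg hΔ.le hB
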